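/- arXiv:math/0410427 — 3 statements merged into one kernel-verified Lean document; each statement's English description precedes it below -/
import Mathlib

section
/- Let X be a real normed space, let N : X × X → ℝ be a normalized negative definite kernel, and let φ₁, φ₂ : [0,∞) → [0,∞) be functions such that φ₁(‖x−y‖) ≤ N(x,y) ≤ φ₂(‖x−y‖) for all x, y ∈ X. Let μ be an invariant mean on the additive group of X. Define g : X → ℝ by g(x) = μ(y ↦ N(y+x, y)) (this is well defined since y ↦ N(y+x,y) is bounded for each x). Then: (i) g is a negative definite function on X; (ii) g(0) = 0; (iii) φ₁(‖x‖) ≤ g(x) ≤ φ₂(‖x‖) for all x ∈ X. -/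
open scoped NNReal

/-- A bounded real-valued function on `X`. -/
def IsBddFun {X : Type*} (h : X → ℝ) : Prop := ∃ M : ℝ, ∀ y, |h y| ≤ M

/-- An invariant mean on the (discrete) abelian group `X`: a positive, normalized,
translation-invariant linear functional on the space of bounded real-valued functions
on `X`. -/
structure InvariantMean (X : Type*) [AddCommGroup X] where
  toFun : (X → ℝ) → ℝ
  map_add' : ∀ h₁ h₂ : X → ℝ, IsBddFun h₁ → IsBddFun h₂ →
    toFun (h₁ + h₂) = toFun h₁ + toFun h₂
  map_smul' : ∀ (c : ℝ) (h : X → ℝ), IsBddFun h → toFun (c • h) = c * toFun h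
  nonneg' : ∀ h : X → ℝ, IsBddFun h → (∀ y, 0 ≤ h y) → 0 ≤ toFun h
  norm_one' : toFun (fun _ => 1) = 1
  invariant' : ∀ h : X → ℝ, IsBddFun h → ∀ x : X, toFun (fun y => h (y + x)) = toFun h


lemma IsBddFun.add {X : Type*} {h₁ h₂ : X → ℝ} (H₁ : IsBddFun h₁) (H₂ : IsBddFun h₂) :
    IsBddFun (h₁ + h₂) := by
  obtain ⟨M₁, hM₁⟩ := H₁; obtain ⟨M₂, hM₂⟩ := H₂
  exact ⟨M₁ + M₂, fun y => (abs_add_le _ _).trans (add_le_add (hM₁ y) (hM₂ y))⟩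

lemma IsBddFun.smul {X : Type*} (c : ℝ) {h : X → ℝ} (H : IsBddFun h) :
    IsBddFun (c • h) := by
  obtain ⟨M, hM⟩ := H
  exact ⟨|c| * M, fun y => by
    simp only [Pi.smul_apply, smul_eq_mul, abs_mul]
    exact mul_le_mul_of_nonneg_left (hM y) (abs_nonneg c)⟩

lemma IsBddFun.sum {X ι : Type*} (s : Finset ι) (f : ι → X → ℝ)
    (H : ∀ i ∈ s, IsBddFun (f i)) : IsBddFun (∑ i ∈ s, f i) := by
  classical
  induction s using Finset.cons_induction with
  | empty => exact ⟨0, fun y => by simp⟩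
  | cons a s' hi ih =>
    rw [Finset.sum_cons]
    exact (H a (Finset.mem_cons_self a s')).add
      (ih fun i his => H i (Finset.mem_cons_of_mem his))

lemma InvariantMean.sum {X ι : Type*} [AddCommGroup X] (μ : InvariantMean X)
    (s : Finset ι) (f : ι → X → ℝ) (H : ∀ i ∈ s, IsBddFun (f i)) :
    μ.toFun (∑ i ∈ s, f i) = ∑ i ∈ s, μ.toFun (f i) := by
  classical
  induction s using Finset.cons_induction with
  | empty =>
    simp only [Finset.sum_empty]
    have := μ.map_smul' 0 (fun _ => 1) ⟨1, fun y => by simp⟩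
    simpa using this
  | cons a s' hi ih =>
    rw [Finset.sum_cons, Finset.sum_cons,
      μ.map_add' _ _ (H a (Finset.mem_cons_self a s'))
        (IsBddFun.sum s' f fun i his => H i (Finset.mem_cons_of_mem his)),
      ih fun i his => H i (Finset.mem_cons_of_mem his)]

lemma InvariantMean.const {X : Type*} [AddCommGroup X] (μ : InvariantMean X) (c : ℝ) :
    μ.toFun (fun _ => c) = c := by
  have h : (fun _ : X => c) = c • (fun _ => (1:ℝ)) := by funext y; simp
  rw [h, μ.map_smul' c _ ⟨1, fun y => by simp⟩, μ.norm_one', mul_one]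

lemma InvariantMean.nonpos {X : Type*} [AddCommGroup X] (μ : InvariantMean X)
    (h : X → ℝ) (H : IsBddFun h) (hle : ∀ y, h y ≤ 0) : μ.toFun h ≤ 0 := by
  have hb : IsBddFun ((-1 : ℝ) • h) := H.smul _
  have h1 := μ.nonneg' _ hb (fun y => by simpa using hle y)
  have h2 := μ.map_smul' (-1) h H
  rw [h2] at h1; linarith

lemma InvariantMean.mono {X : Type*} [AddCommGroup X] (μ : InvariantMean X)
    (h : X → ℝ) (c : ℝ) (H : IsBddFun h) (hle : ∀ y, c ≤ h y) : c ≤ μ.toFun h := by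
  have hb : IsBddFun (h + fun _ => -c) := H.add ⟨|c|, fun y => by simp [abs_neg]⟩
  have h1 := μ.nonneg' _ hb (fun y => by simpa using hle y)
  have h2 := μ.map_add' h (fun _ => -c) H ⟨|c|, fun y => by simp [abs_neg]⟩
  rw [h2, μ.const] at h1; linarith

lemma InvariantMean.le_const {X : Type*} [AddCommGroup X] (μ : InvariantMean X)
    (h : X → ℝ) (c : ℝ) (H : IsBddFun h) (hle : ∀ y, h y ≤ c) : μ.toFun h ≤ c := by
  have hb : IsBddFun (h + fun _ => -c) := H.add ⟨|c|, fun y => by simp [abs_neg]⟩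
  have h1 := μ.nonpos _ hb (fun y => by simpa using hle y)
  have h2 := μ.map_add' h (fun _ => -c) H ⟨|c|, fun y => by simp [abs_neg]⟩
  rw [h2, μ.const] at h1; linarith

/-- **Averaging a negative definite kernel by an invariant mean.**
If `N` is a normalized negative definite kernel on a real normed space `X` with
`φ₁(‖x−y‖) ≤ N x y ≤ φ₂(‖x−y‖)` and `μ` is an invariant mean on `X`, then
`g x = μ (y ↦ N (y+x) y)` is a negative definite function with `g 0 = 0` and
`φ₁(‖x‖) ≤ g x ≤ φ₂(‖x‖)`. -/
theorem invariant_mean_average_of_negative_definite_kernel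
    (X : Type*) [NormedAddCommGroup X] [NormedSpace ℝ X]
    (N : X → X → ℝ)
    (hsymm : ∀ x y : X, N x y = N y x)
    (hdiag : ∀ x : X, N x x = 0)
    (hneg : ∀ (n : ℕ) (x : Fin n → X) (c : Fin n → ℝ), (∑ i, c i) = 0 →
      ∑ i, ∑ j, c i * c j * N (x i) (x j) ≤ 0)
    (φ₁ φ₂ : ℝ≥0 → ℝ≥0)
    (hφ : ∀ x y : X, (φ₁ ‖x - y‖₊ : ℝ) ≤ N x y ∧ N x y ≤ (φ₂ ‖x - y‖₊ : ℝ))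
    (μ : InvariantMean X) :
    let g : X → ℝ := fun x => μ.toFun (fun y => N (y + x) y)
    (∀ (n : ℕ) (x : Fin n → X) (c : Fin n → ℝ), (∑ i, c i) = 0 →
      ∑ i, ∑ j, c i * c j * g (x i - x j) ≤ 0) ∧
    g 0 = 0 ∧
    (∀ x : X, (φ₁ ‖x‖₊ : ℝ) ≤ g x ∧ g x ≤ (φ₂ ‖x‖₊ : ℝ)) := by
  intro g
  have hpt : ∀ (a b : X) (y : X),
      (φ₁ ‖a - b‖₊ : ℝ) ≤ N (y + a) (y + b) ∧ N (y + a) (y + b) ≤ (φ₂ ‖a - b‖₊ : ℝ) := by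
    intro a b y
    have h := hφ (y + a) (y + b)
    have he : (y + a) - (y + b) = a - b := by abel
    rwa [he] at h
  have hbdd : ∀ a b : X, IsBddFun (fun y => N (y + a) (y + b)) := by
    intro a b
    refine ⟨(φ₂ ‖a - b‖₊ : ℝ), fun y => ?_⟩
    have h := hpt a b y
    have h0 : (0:ℝ) ≤ N (y + a) (y + b) := le_trans (by positivity) h.1
    rw [abs_of_nonneg h0]; exact h.2
  have hbdd' : ∀ x : X, IsBddFun (fun y => N (y + x) y) := by
    intro x
    have := hbdd x 0
    simpa using this
  refine ⟨?_, ?_, ?_⟩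
  · intro n x c hc
    have hg : ∀ i j : Fin n, μ.toFun (fun y => N (y + x i) (y + x j)) = g (x i - x j) := by
      intro i j
      calc μ.toFun (fun y => N (y + x i) (y + x j))
          = μ.toFun (fun y => N (y + x j + (x i - x j)) (y + x j)) := by
            congr 1; funext y; congr 1; abel
        _ = g (x i - x j) := μ.invariant' (fun y => N (y + (x i - x j)) y) (hbdd' _) (x j)
    have hfb : ∀ i j : Fin n, IsBddFun ((c i * c j) • fun y => N (y + x i) (y + x j)) :=
      fun i j => (hbdd _ _).smul _
    set S : X → ℝ := fun y => ∑ i, ∑ j, c i * c j * N (y + x i) (y + x j) with hSdef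
    have hS : S = ∑ i, ∑ j, (c i * c j) • (fun y => N (y + x i) (y + x j)) := by
      funext y; simp [hSdef, Finset.sum_apply]
    have h3 : IsBddFun S := by
      rw [hS]; exact IsBddFun.sum _ _ fun i _ => IsBddFun.sum _ _ fun j _ => hfb i j
    have h1 : μ.toFun S = ∑ i, ∑ j, c i * c j * g (x i - x j) := by
      rw [hS, μ.sum _ _ (fun i _ => IsBddFun.sum _ _ (fun j _ => hfb i j))]
      refine Finset.sum_congr rfl fun i _ => ?_
      rw [μ.sum _ _ (fun j _ => hfb i j)]
      refine Finset.sum_congr rfl fun j _ => ?_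
      rw [μ.map_smul' _ _ (hbdd _ _), hg i j]
    have h2 : ∀ y, S y ≤ 0 := fun y => hneg n (fun i => y + x i) c hc
    rw [← h1]
    exact μ.nonpos S h3 h2
  · have he : (fun y => N (y + 0) y) = fun _ : X => (0:ℝ) := by
      funext y; simp [hdiag]
    show μ.toFun (fun y => N (y + 0) y) = 0
    rw [he, μ.const]
  · intro x
    constructor
    · refine μ.mono _ _ (hbdd' x) fun y => ?_
      have := (hpt x 0 y).1
      simpa using this
    · refine μ.le_const _ _ (hbdd' x) fun y => ?_
      have := (hpt x 0 y).2
      simpa using this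
end

section
/- Let X be a real normed space, H a real Hilbert space, 0 < α < 1, and f : X → H a map satisfying ‖f(x) − f(y)‖ ≤ ‖x−y‖^α for all x, y ∈ X. Let μ be an invariant mean on the additive group of X and define g : X → ℝ by g(x) = μ(y ↦ ‖f(y+x) − f(y)‖²). Then for all a, b ∈ X: |g(a) − g(b)| ≤ ‖a−b‖^α · (‖a‖^α + ‖b‖^α). In particular, g is continuous. -/
lemma isBddFun_add {X : Type*} {h₁ h₂ : X → ℝ} (b₁ : IsBddFun h₁) (b₂ : IsBddFun h₂) :
    IsBddFun (h₁ + h₂) := by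
  obtain ⟨M₁, hM₁⟩ := b₁; obtain ⟨M₂, hM₂⟩ := b₂
  exact ⟨M₁ + M₂, fun y => (abs_add_le _ _).trans (add_le_add (hM₁ y) (hM₂ y))⟩

lemma isBddFun_smul {X : Type*} (c : ℝ) {h : X → ℝ} (b : IsBddFun h) :
    IsBddFun (c • h) := by
  obtain ⟨M, hM⟩ := b
  refine ⟨|c| * M, fun y => ?_⟩
  simp only [Pi.smul_apply, smul_eq_mul, abs_mul]
  exact mul_le_mul_of_nonneg_left (hM y) (abs_nonneg c)

lemma isBddFun_const {X : Type*} (c : ℝ) : IsBddFun (fun _ : X => c) :=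
  ⟨|c|, fun _ => le_rfl⟩

lemma mean_mono {X : Type*} [AddCommGroup X] (μ : InvariantMean X)
    {p q : X → ℝ} (bp : IsBddFun p) (bq : IsBddFun q) (hle : ∀ y, p y ≤ q y) :
    μ.toFun p ≤ μ.toFun q := by
  have key : 0 ≤ μ.toFun (q + (-1 : ℝ) • p) := by
    refine μ.nonneg' _ (isBddFun_add bq (isBddFun_smul _ bp)) fun y => ?_
    simp only [Pi.add_apply, Pi.smul_apply, smul_eq_mul, neg_one_mul]
    linarith [hle y]
  have heq : μ.toFun (q + (-1 : ℝ) • p) = μ.toFun q - μ.toFun p := by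
    rw [μ.map_add' _ _ bq (isBddFun_smul _ bp), μ.map_smul' _ _ bp]
    ring
  linarith [heq ▸ key]

lemma mean_abs_sub_le {X : Type*} [AddCommGroup X] (μ : InvariantMean X)
    {h₁ h₂ : X → ℝ} (b₁ : IsBddFun h₁) (b₂ : IsBddFun h₂) (C : ℝ)
    (hC : ∀ y, |h₁ y - h₂ y| ≤ C) : |μ.toFun h₁ - μ.toFun h₂| ≤ C := by
  have hconst : ∀ c : ℝ, μ.toFun (fun _ : X => c) = c := by
    intro c
    have : (fun _ : X => c) = c • (fun _ : X => (1 : ℝ)) := by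
      funext y; simp
    rw [this, μ.map_smul' _ _ (isBddFun_const 1), μ.norm_one']
    ring
  have up : μ.toFun h₁ ≤ μ.toFun h₂ + C := by
    have h1 : μ.toFun h₁ ≤ μ.toFun (h₂ + fun _ => C) := by
      refine mean_mono μ b₁ (isBddFun_add b₂ (isBddFun_const C)) fun y => ?_
      have := (abs_le.mp (hC y)).2
      simp only [Pi.add_apply]; linarith
    rw [μ.map_add' _ _ b₂ (isBddFun_const C), hconst] at h1
    exact h1
  have dn : μ.toFun h₂ - C ≤ μ.toFun h₁ := by
    have h1 : μ.toFun (h₂ + fun _ => -C) ≤ μ.toFun h₁ := by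
      refine mean_mono μ (isBddFun_add b₂ (isBddFun_const (-C))) b₁ fun y => ?_
      have := (abs_le.mp (hC y)).1
      simp only [Pi.add_apply]; linarith
    rw [μ.map_add' _ _ b₂ (isBddFun_const (-C)), hconst] at h1
    linarith
  rw [abs_le]; constructor <;> linarith

/-- **Hölder continuity of the averaged function.**
If `f : X → H` satisfies `‖f x − f y‖ ≤ ‖x−y‖^α` (`0 < α < 1`) and `μ` is an invariant
mean on `X`, then `g x = μ (y ↦ ‖f (y+x) − f y‖²)` satisfies
`|g a − g b| ≤ ‖a−b‖^α (‖a‖^α + ‖b‖^α)`; in particular `g` is continuous. -/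
theorem invariant_mean_average_is_holder
    (X : Type*) [NormedAddCommGroup X] [NormedSpace ℝ X]
    (H : Type*) [NormedAddCommGroup H] [InnerProductSpace ℝ H]
    (α : ℝ) (hα₀ : 0 < α) (hα₁ : α < 1)
    (f : X → H) (hf : ∀ x y : X, ‖f x - f y‖ ≤ ‖x - y‖ ^ α)
    (μ : InvariantMean X) :
    let g : X → ℝ := fun x => μ.toFun (fun y => ‖f (y + x) - f y‖ ^ 2)
    (∀ a b : X, |g a - g b| ≤ ‖a - b‖ ^ α * (‖a‖ ^ α + ‖b‖ ^ α)) ∧ Continuous g := by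
  intro g
  have hnorm : ∀ (x y : X), ‖f (y + x) - f y‖ ≤ ‖x‖ ^ α := by
    intro x y
    have := hf (y + x) y
    simpa using this
  have hbdd : ∀ x : X, IsBddFun (fun y => ‖f (y + x) - f y‖ ^ 2) := by
    intro x
    refine ⟨(‖x‖ ^ α) ^ 2, fun y => ?_⟩
    rw [abs_of_nonneg (by positivity)]
    exact pow_le_pow_left₀ (norm_nonneg _) (hnorm x y) 2
  have key : ∀ a b : X, |g a - g b| ≤ ‖a - b‖ ^ α * (‖a‖ ^ α + ‖b‖ ^ α) := by
    intro a b
    refine mean_abs_sub_le μ (hbdd a) (hbdd b) _ fun y => ?_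
    set u := f (y + a) - f y
    set v := f (y + b) - f y
    have huv : ‖u - v‖ ≤ ‖a - b‖ ^ α := by
      have := hf (y + a) (y + b)
      have h1 : (y + a) - (y + b) = a - b := by abel
      have h2 : u - v = f (y + a) - f (y + b) := by simp [u, v]
      rw [h2]
      simpa [h1] using this
    have hu : ‖u‖ ≤ ‖a‖ ^ α := hnorm a y
    have hv : ‖v‖ ≤ ‖b‖ ^ α := hnorm b y
    have factor : ‖u‖ ^ 2 - ‖v‖ ^ 2 = (‖u‖ - ‖v‖) * (‖u‖ + ‖v‖) := by ring
    rw [factor, abs_mul]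
    have h3 : |‖u‖ - ‖v‖| ≤ ‖a - b‖ ^ α := (abs_norm_sub_norm_le u v).trans huv
    have h4 : |‖u‖ + ‖v‖| ≤ ‖a‖ ^ α + ‖b‖ ^ α := by
      rw [abs_of_nonneg (by positivity)]
      exact add_le_add hu hv
    exact mul_le_mul h3 h4 (abs_nonneg _) (by positivity)
  refine ⟨key, ?_⟩
  rw [continuous_iff_continuousAt]
  intro b
  have hF : Continuous (fun a : X => ‖a - b‖ ^ α * (‖a‖ ^ α + ‖b‖ ^ α)) := by
    have hr : Continuous (fun t : ℝ => t ^ α) :=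
      Real.continuous_rpow_const hα₀.le
    fun_prop
  have hF0 : Filter.Tendsto (fun a : X => ‖a - b‖ ^ α * (‖a‖ ^ α + ‖b‖ ^ α))
      (nhds b) (nhds 0) := by
    simpa [sub_self, Real.zero_rpow hα₀.ne'] using hF.tendsto b
  have h0 : Filter.Tendsto (fun a => g a - g b) (nhds b) (nhds 0) :=
    squeeze_zero_norm (fun a => by simpa using key a b) hF0
  have := h0.add_const (g b)
  have h1 : Filter.Tendsto g (nhds b) (nhds (g b)) := by simpa using this
  exact h1
end

section
/- Fix 2 < p < ∞ and 0 < α < 1/2. Suppose g : ℓ_p → ℝ is a negative definite function with g(0) = 0, satisfying φ₁(‖x‖) ≤ g(x) ≤ ‖x‖^{2α} for all x ∈ ℓ_p (for some nondecreasing φ₁ : [0,∞) → [0,∞) with φ₁(t) → ∞), and satisfying |g(a)−g(b)| ≤ ‖a−b‖^α(‖a‖^α+‖b‖^α) for all a, b. Then there exists a continuous negative definite function g̃ : ℓ_p → ℝ with g̃(0) = 0 and φ₁(‖x‖) ≤ g̃(x) ≤ ‖x‖^{2α} for all x, which is in addition symmetric: for every sequence of signs θ : ℕ → {−1,+1} and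 every permutation σ of ℕ, g̃(T_{θ,σ} x) = g̃(x) for all x ∈ ℓ_p. -/
open scoped NNReal ENNReal
open Filter

/-- For a sequence of signs `θ : ℕ → {−1,+1}` and a permutation `σ` of `ℕ`, the linear
isometry `T_{θ,σ}` of `ℓ_p` given coordinatewise by `(T_{θ,σ} x) n = θ n * x (σ⁻¹ n)`. -/
noncomputable def signPermMap (p : ℝ≥0∞) [Fact (1 ≤ p)] (hp : p ≠ ∞)
    (θ : ℕ → ℝ) (hθ : ∀ n, θ n = 1 ∨ θ n = -1) (σ : Equiv.Perm ℕ)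
    (x : lp (fun _ : ℕ => ℝ) p) : lp (fun _ : ℕ => ℝ) p :=
  ⟨fun n => θ n * x (σ.symm n), by
    have hp0 : 0 < p.toReal := by
      have h1 : (1 : ℝ≥0∞) ≤ p := Fact.out
      exact ENNReal.toReal_pos (by positivity) hp
    apply memℓp_gen
    have hx : Summable fun i => ‖(x : ∀ _ : ℕ, ℝ) i‖ ^ p.toReal :=
      (memℓp_gen_iff hp0).1 (lp.memℓp x)
    have := (Equiv.summable_iff σ.symm (f := fun i => ‖(x : ∀ _ : ℕ, ℝ) i‖ ^ p.toReal)).2 hx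
    convert this using 2 with n
    have : |θ n| = 1 := by rcases hθ n with h | h <;> simp [h]
    simp [Real.norm_eq_abs, abs_mul, this, Function.comp]⟩

namespace SymmND

variable (P : ℝ≥0∞) [Fact (1 ≤ P)]

lemma prPos (hP : P ≠ ∞) : 0 < P.toReal := by
  have h1 : (1 : ℝ≥0∞) ≤ P := Fact.out
  exact ENNReal.toReal_pos (by positivity) hP

lemma sp_apply (hP : P ≠ ∞) (θ : ℕ → ℝ) (hθ : ∀ n, θ n = 1 ∨ θ n = -1) (σ : Equiv.Perm ℕ)
    (x : lp (fun _ : ℕ => ℝ) P) (k : ℕ) :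
    (signPermMap P hP θ hθ σ x : ∀ _ : ℕ, ℝ) k = θ k * x (σ.symm k) := rfl

lemma sp_sub (hP : P ≠ ∞) (θ : ℕ → ℝ) (hθ : ∀ n, θ n = 1 ∨ θ n = -1) (σ : Equiv.Perm ℕ)
    (x y : lp (fun _ : ℕ => ℝ) P) :
    signPermMap P hP θ hθ σ (x - y) = signPermMap P hP θ hθ σ x - signPermMap P hP θ hθ σ y := by
  apply Subtype.ext
  funext k
  simp only [lp.coeFn_sub, Pi.sub_apply]
  show θ k * (x - y : lp (fun _ : ℕ => ℝ) P) (σ.symm k) = _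
  rw [lp.coeFn_sub, Pi.sub_apply, sp_apply, sp_apply]
  ring

lemma sp_zero (hP : P ≠ ∞) (θ : ℕ → ℝ) (hθ : ∀ n, θ n = 1 ∨ θ n = -1) (σ : Equiv.Perm ℕ) :
    signPermMap P hP θ hθ σ 0 = 0 := by
  apply Subtype.ext
  funext k
  show θ k * (0 : lp (fun _ : ℕ => ℝ) P) (σ.symm k) = _
  rw [lp.coeFn_zero]
  simp

lemma sp_norm (hP : P ≠ ∞) (θ : ℕ → ℝ) (hθ : ∀ n, θ n = 1 ∨ θ n = -1) (σ : Equiv.Perm ℕ)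
    (x : lp (fun _ : ℕ => ℝ) P) :
    ‖signPermMap P hP θ hθ σ x‖ = ‖x‖ := by
  rw [lp.norm_eq_tsum_rpow (prPos P hP), lp.norm_eq_tsum_rpow (prPos P hP)]
  congr 1
  have h1 : ∀ k, ‖(signPermMap P hP θ hθ σ x : ∀ _ : ℕ, ℝ) k‖ ^ P.toReal
      = ‖(x : ∀ _ : ℕ, ℝ) (σ.symm k)‖ ^ P.toReal := by
    intro k
    rw [sp_apply]
    have : |θ k| = 1 := by rcases hθ k with h | h <;> simp [h]
    simp [Real.norm_eq_abs, abs_mul, this]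
  rw [tsum_congr h1]
  exact Equiv.tsum_eq σ.symm fun i => ‖(x : ∀ _ : ℕ, ℝ) i‖ ^ P.toReal

/-- coordinates of an `lp` element are `p`-summable. -/
lemma summable_coord (hP : P ≠ ∞) (x : lp (fun _ : ℕ => ℝ) P) :
    Summable fun i => |(x : ∀ _ : ℕ, ℝ) i| ^ P.toReal := by
  have hx : Summable fun i => ‖(x : ∀ _ : ℕ, ℝ) i‖ ^ P.toReal :=
    (memℓp_gen_iff (prPos P hP)).1 (lp.memℓp x)
  simpa [Real.norm_eq_abs] using hx

end SymmND
namespace SymmND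

lemma summable_ite_of (f : ℕ → ℝ) (hf : Summable f) (h0 : ∀ m, 0 ≤ f m) (c : ℕ → Prop)
    [DecidablePred c] : Summable fun m => if c m then f m else 0 := by
  apply Summable.of_nonneg_of_le (fun m => ?_) (fun m => ?_) hf <;>
    by_cases h : c m <;> simp [h, h0 m]

lemma tendsto_tail (f : ℕ → ℝ) (hf : Summable f) (h0 : ∀ m, 0 ≤ f m) :
    Filter.Tendsto (fun n => ∑' m, if n ≤ m then f m else 0) Filter.atTop (nhds 0) := by
  have key : ∀ n, ∑' m, (if n ≤ m then f m else 0)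
      = (∑' m, f m) - ∑ m ∈ Finset.range n, f m := by
    intro n
    have hsplit : ∀ m, f m = (if m < n then f m else 0) + (if n ≤ m then f m else 0) := by
      intro m
      by_cases h : m < n
      · simp [h, not_le.mpr h]
      · simp [h, Nat.le_of_not_lt h]
    have hs1 : Summable (fun m => if m < n then f m else 0) := summable_ite_of f hf h0 _
    have hs2 : Summable (fun m => if n ≤ m then f m else 0) := summable_ite_of f hf h0 _
    have h2 : ∑' m, (if m < n then f m else 0) = ∑ m ∈ Finset.range n, f m := by
      rw [tsum_eq_sum (s := Finset.range n)]
      · exact Finset.sum_congr rfl fun m hm => by simp [Finset.mem_range.mp hm]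
      · intro m hm
        have h5 : ¬ m < n := fun h => hm (Finset.mem_range.mpr h)
        simp [h5]
    rw [show (∑' m, f m) = _ from tsum_congr hsplit, Summable.tsum_add hs1 hs2, h2]
    ring
  simp only [key]
  have h3 := hf.hasSum.tendsto_sum_nat
  have h4 := Filter.Tendsto.sub (tendsto_const_nhds (x := ∑' m, f m)) h3
  simpa using h4

lemma abs_sub_rpow_le (q : ℝ) (hq : 0 ≤ q) (a b : ℝ) :
    |a - b| ^ q ≤ 2 ^ q * (|a| ^ q + |b| ^ q) := by
  have h1 : |a - b| ≤ 2 * max |a| |b| := by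
    calc |a - b| ≤ |a| + |b| := abs_sub a b
    _ ≤ 2 * max |a| |b| := by
      rcases le_total |a| |b| with h | h <;> simp [max_eq_right, max_eq_left, h] <;> nlinarith [abs_nonneg a, abs_nonneg b]
  calc |a - b| ^ q ≤ (2 * max |a| |b|) ^ q :=
        Real.rpow_le_rpow (abs_nonneg _) h1 hq
  _ = 2 ^ q * (max |a| |b|) ^ q := Real.mul_rpow (by norm_num) (le_max_of_le_left (abs_nonneg a))
  _ ≤ 2 ^ q * (|a| ^ q + |b| ^ q) := by
      apply mul_le_mul_of_nonneg_left _ (by positivity)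
      rcases le_total |a| |b| with h | h
      · rw [max_eq_right h]
        nlinarith [Real.rpow_nonneg (abs_nonneg a) q]
      · rw [max_eq_left h]
        nlinarith [Real.rpow_nonneg (abs_nonneg b) q]

variable (P : ℝ≥0∞) [Fact (1 ≤ P)]

lemma norm_sub_le_tsum (hP : P ≠ ∞) (u v : lp (fun _ : ℕ => ℝ) P) (h : ℕ → ℝ)
    (hsum : Summable h)
    (hb : ∀ m, |(u : ∀ _ : ℕ, ℝ) m - (v : ∀ _ : ℕ, ℝ) m| ^ P.toReal ≤ h m) :
    ‖u - v‖ ≤ (∑' m, h m) ^ (1 / P.toReal) := by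
  rw [lp.norm_eq_tsum_rpow (prPos P hP)]
  have hsl : Summable fun m => ‖((u - v : lp (fun _ : ℕ => ℝ) P) : ∀ _ : ℕ, ℝ) m‖ ^ P.toReal := by
    have := summable_coord P hP (u - v)
    simpa [Real.norm_eq_abs] using this
  apply Real.rpow_le_rpow (tsum_nonneg fun m => by positivity) _
    (one_div_nonneg.2 (prPos P hP).le)
  apply Summable.tsum_le_tsum _ hsl hsum
  intro m
  have hc : ((u - v : lp (fun _ : ℕ => ℝ) P) : ∀ _ : ℕ, ℝ) m
      = (u : ∀ _ : ℕ, ℝ) m - (v : ∀ _ : ℕ, ℝ) m := by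
    rw [lp.coeFn_sub]; rfl
  rw [hc, Real.norm_eq_abs]
  exact hb m

end SymmND
namespace SymmND

def sgn (n : ℕ) (b : Fin n → Bool) : ℕ → ℝ :=
  fun k => if h : k < n then (if b ⟨k, h⟩ then 1 else -1) else 1

lemma sgn_pm (n : ℕ) (b : Fin n → Bool) : ∀ k, sgn n b k = 1 ∨ sgn n b k = -1 := by
  intro k
  unfold sgn
  by_cases h : k < n
  · by_cases hb : b ⟨k, h⟩ <;> simp [h, hb]
  · simp [h]

lemma sgn_ge (n : ℕ) (b : Fin n → Bool) (k : ℕ) (h : ¬ k < n) : sgn n b k = 1 := by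
  simp [sgn, h]

lemma sgn_lt (n : ℕ) (b : Fin n → Bool) (k : ℕ) (h : k < n) :
    sgn n b k = (if b ⟨k, h⟩ then (1 : ℝ) else -1) := by
  simp [sgn, h]

def pext (n : ℕ) (τ : Equiv.Perm (Fin n)) : Equiv.Perm ℕ :=
  τ.extendDomain Fin.equivSubtype

lemma pext_lt (n : ℕ) (τ : Equiv.Perm (Fin n)) (k : ℕ) (h : k < n) :
    pext n τ k = ↑(τ ⟨k, h⟩) := by
  have := Equiv.Perm.extendDomain_apply_subtype τ (Fin.equivSubtype (n := n)) (b := k) h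
  simpa [pext, Fin.equivSubtype] using this

lemma pext_ge (n : ℕ) (τ : Equiv.Perm (Fin n)) (k : ℕ) (h : ¬ k < n) :
    pext n τ k = k :=
  Equiv.Perm.extendDomain_apply_not_subtype τ Fin.equivSubtype h

lemma pext_symm (n : ℕ) (τ : Equiv.Perm (Fin n)) :
    (pext n τ).symm = pext n τ.symm := by
  simp [pext]

lemma pext_symm_lt (n : ℕ) (τ : Equiv.Perm (Fin n)) (k : ℕ) (h : k < n) :
    (pext n τ).symm k = ↑(τ.symm ⟨k, h⟩) := by
  rw [pext_symm]; exact pext_lt n τ.symm k h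

lemma pext_symm_ge (n : ℕ) (τ : Equiv.Perm (Fin n)) (k : ℕ) (h : ¬ k < n) :
    (pext n τ).symm k = k := by
  rw [pext_symm]; exact pext_ge n τ.symm k h

lemma pext_mul (n : ℕ) (τ δ : Equiv.Perm (Fin n)) :
    pext n (τ * δ) = pext n τ * pext n δ :=
  map_mul (Equiv.Perm.extendDomainHom Fin.equivSubtype) τ δ

variable (P : ℝ≥0∞) [Fact (1 ≤ P)]

noncomputable def Tmap (hP : P ≠ ∞) (n : ℕ) (γ : (Fin n → Bool) × Equiv.Perm (Fin n))
    (x : lp (fun _ : ℕ => ℝ) P) : lp (fun _ : ℕ => ℝ) P :=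
  signPermMap P hP (sgn n γ.1) (sgn_pm n γ.1) (pext n γ.2) x

noncomputable def A (hP : P ≠ ∞) (g : lp (fun _ : ℕ => ℝ) P → ℝ) (n : ℕ)
    (x : lp (fun _ : ℕ => ℝ) P) : ℝ :=
  (∑ γ : (Fin n → Bool) × Equiv.Perm (Fin n), g (Tmap P hP n γ x)) /
    (Fintype.card ((Fin n → Bool) × Equiv.Perm (Fin n)))

lemma card_pos (n : ℕ) :
    0 < (Fintype.card ((Fin n → Bool) × Equiv.Perm (Fin n)) : ℝ) := by
  have := Fintype.card_pos (α := (Fin n → Bool) × Equiv.Perm (Fin n))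
  exact_mod_cast this

lemma Tmap_norm (hP : P ≠ ∞) (n : ℕ) (γ : (Fin n → Bool) × Equiv.Perm (Fin n))
    (x : lp (fun _ : ℕ => ℝ) P) : ‖Tmap P hP n γ x‖ = ‖x‖ :=
  sp_norm P hP _ _ _ x

lemma Tmap_nnnorm (hP : P ≠ ∞) (n : ℕ) (γ : (Fin n → Bool) × Equiv.Perm (Fin n))
    (x : lp (fun _ : ℕ => ℝ) P) : ‖Tmap P hP n γ x‖₊ = ‖x‖₊ := by
  ext
  exact Tmap_norm P hP n γ x

lemma Tmap_sub (hP : P ≠ ∞) (n : ℕ) (γ : (Fin n → Bool) × Equiv.Perm (Fin n))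
    (x y : lp (fun _ : ℕ => ℝ) P) :
    Tmap P hP n γ (x - y) = Tmap P hP n γ x - Tmap P hP n γ y :=
  sp_sub P hP _ _ _ x y

lemma A_bounds (hP : P ≠ ∞) (g : lp (fun _ : ℕ => ℝ) P → ℝ) (α : ℝ) (φ₁ : ℝ≥0 → ℝ≥0)
    (hbd : ∀ x, (φ₁ ‖x‖₊ : ℝ) ≤ g x ∧ g x ≤ ‖x‖ ^ (2 * α)) (n : ℕ)
    (x : lp (fun _ : ℕ => ℝ) P) :
    (φ₁ ‖x‖₊ : ℝ) ≤ A P hP g n x ∧ A P hP g n x ≤ ‖x‖ ^ (2 * α) := by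
  set N := (Fintype.card ((Fin n → Bool) × Equiv.Perm (Fin n)) : ℝ) with hN
  have hNpos : 0 < N := card_pos n
  constructor
  · rw [A, le_div_iff₀ hNpos]
    have : ∀ γ ∈ (Finset.univ : Finset ((Fin n → Bool) × Equiv.Perm (Fin n))),
        (φ₁ ‖x‖₊ : ℝ) ≤ g (Tmap P hP n γ x) := by
      intro γ _
      have := (hbd (Tmap P hP n γ x)).1
      rwa [Tmap_nnnorm P hP n γ x] at this
    have h2 := Finset.card_nsmul_le_sum Finset.univ _ _ this
    simpa [mul_comm, nsmul_eq_mul, hN] using h2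
  · rw [A, div_le_iff₀ hNpos]
    have : ∀ γ ∈ (Finset.univ : Finset ((Fin n → Bool) × Equiv.Perm (Fin n))),
        g (Tmap P hP n γ x) ≤ ‖x‖ ^ (2 * α) := by
      intro γ _
      have := (hbd (Tmap P hP n γ x)).2
      rwa [Tmap_norm P hP n γ x] at this
    have h2 := Finset.sum_le_card_nsmul Finset.univ _ _ this
    simpa [mul_comm, nsmul_eq_mul, hN] using h2

lemma A_zero (hP : P ≠ ∞) (g : lp (fun _ : ℕ => ℝ) P → ℝ) (hg0 : g 0 = 0) (n : ℕ) :
    A P hP g n 0 = 0 := by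
  rw [A]
  have : ∀ γ : (Fin n → Bool) × Equiv.Perm (Fin n), g (Tmap P hP n γ 0) = 0 := by
    intro γ
    rw [Tmap, sp_zero, hg0]
  simp [this]

lemma A_holder (hP : P ≠ ∞) (g : lp (fun _ : ℕ => ℝ) P → ℝ) (α : ℝ)
    (hHol : ∀ a b, |g a - g b| ≤ ‖a - b‖ ^ α * (‖a‖ ^ α + ‖b‖ ^ α)) (n : ℕ)
    (u v : lp (fun _ : ℕ => ℝ) P) :
    |A P hP g n u - A P hP g n v| ≤ ‖u - v‖ ^ α * (‖u‖ ^ α + ‖v‖ ^ α) := by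
  set N := (Fintype.card ((Fin n → Bool) × Equiv.Perm (Fin n)) : ℝ) with hN
  have hNpos : 0 < N := card_pos n
  rw [A, A, div_sub_div_same, abs_div, abs_of_pos hNpos, div_le_iff₀ hNpos,
    ← Finset.sum_sub_distrib]
  calc |∑ γ : (Fin n → Bool) × Equiv.Perm (Fin n), (g (Tmap P hP n γ u) - g (Tmap P hP n γ v))|
      ≤ ∑ γ : (Fin n → Bool) × Equiv.Perm (Fin n), |g (Tmap P hP n γ u) - g (Tmap P hP n γ v)| :=
        Finset.abs_sum_le_sum_abs _ _
    _ ≤ ∑ _γ : (Fin n → Bool) × Equiv.Perm (Fin n), ‖u - v‖ ^ α * (‖u‖ ^ α + ‖v‖ ^ α) := by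
        apply Finset.sum_le_sum
        intro γ _
        have h1 := hHol (Tmap P hP n γ u) (Tmap P hP n γ v)
        rwa [← Tmap_sub P hP n γ u v, Tmap_norm P hP n γ, Tmap_norm P hP n γ,
          Tmap_norm P hP n γ] at h1
    _ = ‖u - v‖ ^ α * (‖u‖ ^ α + ‖v‖ ^ α) * N := by
        rw [Finset.sum_const]
        simp [hN, nsmul_eq_mul, mul_comm]

lemma A_negdef (hP : P ≠ ∞) (g : lp (fun _ : ℕ => ℝ) P → ℝ)
    (hneg : ∀ (m : ℕ) (x : Fin m → lp (fun _ : ℕ => ℝ) P) (c : Fin m → ℝ),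
      (∑ i, c i) = 0 → ∑ i, ∑ j, c i * c j * g (x i - x j) ≤ 0)
    (n : ℕ) (m : ℕ) (x : Fin m → lp (fun _ : ℕ => ℝ) P) (c : Fin m → ℝ)
    (hc : (∑ i, c i) = 0) :
    ∑ i, ∑ j, c i * c j * A P hP g n (x i - x j) ≤ 0 := by
  set N := (Fintype.card ((Fin n → Bool) × Equiv.Perm (Fin n)) : ℝ) with hN
  have hNpos : 0 < N := card_pos n
  have e1 : ∀ i j, c i * c j * A P hP g n (x i - x j)
      = (∑ γ : (Fin n → Bool) × Equiv.Perm (Fin n),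
          c i * c j * g (Tmap P hP n γ (x i) - Tmap P hP n γ (x j))) / N := by
    intro i j
    rw [A]
    simp only [Tmap_sub]
    rw [← mul_div_assoc, Finset.mul_sum]
  simp only [e1, ← Finset.sum_div]
  have e2 : ∑ i, ∑ j, ∑ γ : (Fin n → Bool) × Equiv.Perm (Fin n),
        c i * c j * g (Tmap P hP n γ (x i) - Tmap P hP n γ (x j))
      = ∑ γ : (Fin n → Bool) × Equiv.Perm (Fin n), ∑ i, ∑ j,
        c i * c j * g (Tmap P hP n γ (x i) - Tmap P hP n γ (x j)) := by
    have e2a : ∀ i : Fin m, (∑ j, ∑ γ : (Fin n → Bool) × Equiv.Perm (Fin n),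
        c i * c j * g (Tmap P hP n γ (x i) - Tmap P hP n γ (x j)))
        = ∑ γ : (Fin n → Bool) × Equiv.Perm (Fin n), ∑ j,
        c i * c j * g (Tmap P hP n γ (x i) - Tmap P hP n γ (x j)) :=
      fun i => Finset.sum_comm
    calc (∑ i, ∑ j, ∑ γ : (Fin n → Bool) × Equiv.Perm (Fin n),
        c i * c j * g (Tmap P hP n γ (x i) - Tmap P hP n γ (x j)))
        = ∑ i, ∑ γ : (Fin n → Bool) × Equiv.Perm (Fin n), ∑ j,
          c i * c j * g (Tmap P hP n γ (x i) - Tmap P hP n γ (x j)) :=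
        Finset.sum_congr rfl fun i _ => e2a i
      _ = _ := Finset.sum_comm
  rw [e2]
  apply div_nonpos_of_nonpos_of_nonneg _ hNpos.le
  apply Finset.sum_nonpos
  intro γ _
  exact hneg m (fun i => Tmap P hP n γ (x i)) c hc

end SymmND
namespace SymmND

lemma sgn_true (n : ℕ) (k : ℕ) : sgn n (fun _ => true) k = 1 := by
  unfold sgn
  by_cases h : k < n <;> simp [h]

def flip' {n : ℕ} (mk : Fin n → Bool) (b : Fin n → Bool) : Fin n → Bool :=
  fun j => if mk j then !(b j) else b j

lemma flip'_invol {n : ℕ} (mk : Fin n → Bool) : Function.Involutive (flip' mk) := by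
  intro b
  funext j
  unfold flip'
  by_cases h : mk j <;> simp [h]

lemma sum_flip' {n : ℕ} (mk : Fin n → Bool) (f : (Fin n → Bool) → ℝ) :
    ∑ b : Fin n → Bool, f (flip' mk b) = ∑ b : Fin n → Bool, f b :=
  Equiv.sum_comp ((flip'_invol mk).toPerm _) f

lemma sum_mulRight {n : ℕ} (δ : Equiv.Perm (Fin n))
    (f : (Fin n → Bool) × Equiv.Perm (Fin n) → ℝ) :
    ∑ γ : (Fin n → Bool) × Equiv.Perm (Fin n), f (γ.1, γ.2 * δ)
      = ∑ γ : (Fin n → Bool) × Equiv.Perm (Fin n), f γ :=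
  Fintype.sum_equiv ((Equiv.refl _).prodCongr (Equiv.mulRight δ))
    (fun γ => f (γ.1, γ.2 * δ)) f (fun γ => rfl)

variable (P : ℝ≥0∞) [Fact (1 ≤ P)]

/-- composition with a "finite" permutation. -/
lemma Tmap_comp_perm (hP : P ≠ ∞) (n : ℕ) (b : Fin n → Bool) (τ δ : Equiv.Perm (Fin n))
    (x : lp (fun _ : ℕ => ℝ) P) :
    Tmap P hP n (b, τ) (Tmap P hP n (fun _ => true, δ) x) = Tmap P hP n (b, τ * δ) x := by
  apply Subtype.ext
  funext k
  show sgn n b k * (Tmap P hP n (fun _ => true, δ) x : ∀ _ : ℕ, ℝ) ((pext n τ).symm k)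
      = sgn n b k * (x : ∀ _ : ℕ, ℝ) ((pext n (τ * δ)).symm k)
  rw [show ((Tmap P hP n (fun _ => true, δ) x : ∀ _ : ℕ, ℝ) ((pext n τ).symm k))
      = sgn n (fun _ => true) ((pext n τ).symm k)
        * (x : ∀ _ : ℕ, ℝ) ((pext n δ).symm ((pext n τ).symm k)) from rfl]
  rw [sgn_true]
  have hs : (pext n (τ * δ)).symm k = (pext n δ).symm ((pext n τ).symm k) := by
    rw [Equiv.symm_apply_eq, pext_mul, Equiv.Perm.mul_apply, Equiv.apply_symm_apply,
      Equiv.apply_symm_apply]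
  rw [hs]
  ring

/-- composition with a sign change supported in the first `n` coordinates. -/
lemma Tmap_comp_sign (hP : P ≠ ∞) (n : ℕ) (b : Fin n → Bool) (τ : Equiv.Perm (Fin n))
    (θ : ℕ → ℝ) (hθ : ∀ m, θ m = 1 ∨ θ m = -1) (hθn : ∀ m, ¬ m < n → θ m = 1)
    (x : lp (fun _ : ℕ => ℝ) P) :
    Tmap P hP n (b, τ) (signPermMap P hP θ hθ (Equiv.refl ℕ) x)
      = Tmap P hP n (flip' (fun j => decide (θ ↑(τ.symm j) = -1)) b, τ) x := by
  apply Subtype.ext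
  funext k
  show sgn n b k * (signPermMap P hP θ hθ (Equiv.refl ℕ) x : ∀ _ : ℕ, ℝ) ((pext n τ).symm k)
      = sgn n (flip' (fun j => decide (θ ↑(τ.symm j) = -1)) b) k
        * (x : ∀ _ : ℕ, ℝ) ((pext n τ).symm k)
  rw [sp_apply]
  show sgn n b k * (θ ((pext n τ).symm k) * (x : ∀ _ : ℕ, ℝ) ((pext n τ).symm k)) = _
  have key : sgn n b k * θ ((pext n τ).symm k)
      = sgn n (flip' (fun j => decide (θ ↑(τ.symm j) = -1)) b) k := by
    by_cases h : k < n
    · rw [pext_symm_lt n τ k h, sgn_lt n _ k h, sgn_lt n _ k h]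
      rcases hθ ↑(τ.symm ⟨k, h⟩) with hv | hv <;>
        by_cases hb : b ⟨k, h⟩ <;>
          simp [flip', hb, hv] <;> norm_num
    · rw [pext_symm_ge n τ k h, hθn k h, sgn_ge n _ k h, sgn_ge n _ k h]
      norm_num
  rw [← key]
  ring

lemma A_comp_perm (hP : P ≠ ∞) (g : lp (fun _ : ℕ => ℝ) P → ℝ) (n : ℕ)
    (δ : Equiv.Perm (Fin n)) (x : lp (fun _ : ℕ => ℝ) P) :
    A P hP g n (Tmap P hP n (fun _ => true, δ) x) = A P hP g n x := by
  rw [A, A]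
  congr 1
  have h1 : ∀ γ : (Fin n → Bool) × Equiv.Perm (Fin n),
      g (Tmap P hP n γ (Tmap P hP n (fun _ => true, δ) x)) = g (Tmap P hP n (γ.1, γ.2 * δ) x) := by
    intro γ
    rw [show γ = (γ.1, γ.2) from rfl, Tmap_comp_perm]
  rw [Finset.sum_congr rfl fun γ _ => h1 γ]
  exact sum_mulRight δ fun γ => g (Tmap P hP n γ x)

lemma A_comp_sign (hP : P ≠ ∞) (g : lp (fun _ : ℕ => ℝ) P → ℝ) (n : ℕ)
    (θ : ℕ → ℝ) (hθ : ∀ m, θ m = 1 ∨ θ m = -1) (hθn : ∀ m, ¬ m < n → θ m = 1)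
    (x : lp (fun _ : ℕ => ℝ) P) :
    A P hP g n (signPermMap P hP θ hθ (Equiv.refl ℕ) x) = A P hP g n x := by
  rw [A, A]
  congr 1
  have h1 : ∀ γ : (Fin n → Bool) × Equiv.Perm (Fin n),
      g (Tmap P hP n γ (signPermMap P hP θ hθ (Equiv.refl ℕ) x))
        = g (Tmap P hP n (flip' (fun j => decide (θ ↑(γ.2.symm j) = -1)) γ.1, γ.2) x) := by
    intro γ
    rw [show γ = (γ.1, γ.2) from rfl, Tmap_comp_sign P hP n γ.1 γ.2 θ hθ hθn]
  rw [Finset.sum_congr rfl fun γ _ => h1 γ]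
  rw [Fintype.sum_prod_type_right, Fintype.sum_prod_type_right]
  apply Finset.sum_congr rfl
  intro τ _
  exact sum_flip' (fun j => decide (θ ↑(τ.symm j) = -1))
    (fun b => g (Tmap P hP n (b, τ) x))

end SymmND
namespace SymmND

/-- the bijection between `{k < n : σ k < n}` and `{m < n : σ⁻¹ m < n}` induced by `σ`. -/
def eK (σ : Equiv.Perm ℕ) (n : ℕ) :
    {k : Fin n // σ ↑k < n} ≃ {m : Fin n // σ.symm ↑m < n} where
  toFun k := ⟨⟨σ ↑k.1, k.2⟩, by simp⟩
  invFun m := ⟨⟨σ.symm ↑m.1, m.2⟩, by simp⟩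
  left_inv k := by
    apply Subtype.ext
    apply Fin.ext
    simp
  right_inv m := by
    apply Subtype.ext
    apply Fin.ext
    simp

/-- a permutation of `Fin n` agreeing with `σ` on `{k < n : σ k < n}`. -/
noncomputable def dperm (σ : Equiv.Perm ℕ) (n : ℕ) : Equiv.Perm (Fin n) :=
  ((Equiv.sumCompl (fun k : Fin n => σ ↑k < n)).symm.trans
    ((eK σ n).sumCongr (Fintype.equivOfCardEq (by
      rw [Fintype.card_subtype_compl, Fintype.card_subtype_compl,
        Fintype.card_congr (eK σ n)])))).trans
    (Equiv.sumCompl (fun m : Fin n => σ.symm ↑m < n))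

lemma dperm_lt (σ : Equiv.Perm ℕ) (n : ℕ) (k : ℕ) (h1 : k < n) (h2 : σ k < n) :
    ↑(dperm σ n ⟨k, h1⟩) = σ k := by
  unfold dperm
  have e1 : (Equiv.sumCompl (fun k : Fin n => σ ↑k < n)).symm ⟨k, h1⟩
      = Sum.inl ⟨⟨k, h1⟩, h2⟩ := Equiv.sumCompl_symm_apply_of_pos (p := fun k : Fin n => σ ↑k < n) (a := ⟨k, h1⟩) h2
  simp only [Equiv.trans_apply, e1, Equiv.sumCongr_apply, Sum.map_inl,
    Equiv.sumCompl_apply_inl]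
  rfl

lemma dperm_symm_lt (σ : Equiv.Perm ℕ) (n : ℕ) (m : ℕ) (h1 : m < n) (h2 : σ.symm m < n) :
    ↑((dperm σ n).symm ⟨m, h1⟩) = σ.symm m := by
  have h3 : σ (σ.symm m) = m := σ.apply_symm_apply m
  have h4 : dperm σ n ⟨σ.symm m, h2⟩ = ⟨m, h1⟩ := by
    apply Fin.ext
    rw [dperm_lt σ n _ h2 (by rw [h3]; exact h1)]
    exact h3
  rw [← h4, Equiv.symm_apply_apply]

variable (P : ℝ≥0∞) [Fact (1 ≤ P)]

lemma pext_dperm_symm (σ : Equiv.Perm ℕ) (n : ℕ) (m : ℕ) (h1 : m < n) (h2 : σ.symm m < n) :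
    (pext n (dperm σ n)).symm m = σ.symm m := by
  rw [pext_symm_lt n _ m h1]
  exact dperm_symm_lt σ n m h1 h2

lemma pext_dperm_lt (σ : Equiv.Perm ℕ) (n : ℕ) (k : ℕ) (h1 : k < n) (h2 : σ k < n) :
    pext n (dperm σ n) k = σ k := by
  rw [pext_lt n _ k h1]
  exact dperm_lt σ n k h1 h2

/-- decomposition of a sign-permutation into a pure sign change and a pure permutation. -/
lemma sp_decomp (hP : P ≠ ∞) (θ : ℕ → ℝ) (hθ : ∀ n, θ n = 1 ∨ θ n = -1) (σ : Equiv.Perm ℕ)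
    (x : lp (fun _ : ℕ => ℝ) P) :
    signPermMap P hP θ hθ σ x
      = signPermMap P hP θ hθ (Equiv.refl ℕ)
          (signPermMap P hP (fun _ => 1) (fun _ => Or.inl rfl) σ x) := by
  apply Subtype.ext
  funext k
  show θ k * (x : ∀ _ : ℕ, ℝ) (σ.symm k)
    = θ k * (signPermMap P hP (fun _ => 1) (fun _ => Or.inl rfl) σ x : ∀ _ : ℕ, ℝ) k
  rw [sp_apply]
  show _ = θ k * (1 * (x : ∀ _ : ℕ, ℝ) (σ.symm k))
  ring

end SymmND
namespace SymmND

noncomputable def tl (f : ℕ → ℝ) (n : ℕ) : ℝ := ∑' m, if n ≤ m then f m else 0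

lemma tl_tendsto (f : ℕ → ℝ) (hf : Summable f) (h0 : ∀ m, 0 ≤ f m) :
    Filter.Tendsto (tl f) Filter.atTop (nhds 0) := tendsto_tail f hf h0

lemma tl_nonneg (f : ℕ → ℝ) (h0 : ∀ m, 0 ≤ f m) (n : ℕ) : 0 ≤ tl f n :=
  tsum_nonneg fun m => by by_cases h : n ≤ m <;> simp [h, h0 m]

variable (P : ℝ≥0∞) [Fact (1 ≤ P)]

lemma A_sign_diff_tendsto (hP : P ≠ ∞) (g : lp (fun _ : ℕ => ℝ) P → ℝ) (α : ℝ) (hα₀ : 0 < α)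
    (hHol : ∀ a b, |g a - g b| ≤ ‖a - b‖ ^ α * (‖a‖ ^ α + ‖b‖ ^ α))
    (θ : ℕ → ℝ) (hθ : ∀ m, θ m = 1 ∨ θ m = -1) (x : lp (fun _ : ℕ => ℝ) P) :
    Filter.Tendsto
      (fun n => A P hP g n (signPermMap P hP θ hθ (Equiv.refl ℕ) x) - A P hP g n x)
      Filter.atTop (nhds 0) := by
  have hq : 0 < P.toReal := prPos P hP
  set q := P.toReal with hqdef
  set fx : ℕ → ℝ := fun a => |(x : ∀ _ : ℕ, ℝ) a| ^ q with hfx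
  have hxs : Summable fx := summable_coord P hP x
  have hfx0 : ∀ m, 0 ≤ fx m := fun m => Real.rpow_nonneg (abs_nonneg _) q
  have key : ∀ n, |A P hP g n (signPermMap P hP θ hθ (Equiv.refl ℕ) x) - A P hP g n x|
      ≤ ((2 ^ q * tl fx n) ^ (1 / q)) ^ α * (2 * ‖x‖ ^ α) := by
    intro n
    set θtr : ℕ → ℝ := fun m => if m < n then θ m else 1 with hθtr
    have hθtr1 : ∀ m, θtr m = 1 ∨ θtr m = -1 := by
      intro m
      by_cases h : m < n
      · simpa [hθtr, h] using hθ m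
      · simp [hθtr, h]
    have hθn : ∀ m, ¬ m < n → θtr m = 1 := by
      intro m h; simp [hθtr, h]
    have hAeq : A P hP g n (signPermMap P hP θtr hθtr1 (Equiv.refl ℕ) x) = A P hP g n x :=
      A_comp_sign P hP g n θtr hθtr1 hθn x
    rw [← hAeq]
    have hH := A_holder P hP g α hHol n (signPermMap P hP θ hθ (Equiv.refl ℕ) x)
      (signPermMap P hP θtr hθtr1 (Equiv.refl ℕ) x)
    rw [sp_norm, sp_norm] at hH
    have hnd : ‖signPermMap P hP θ hθ (Equiv.refl ℕ) x
        - signPermMap P hP θtr hθtr1 (Equiv.refl ℕ) x‖ ≤ (2 ^ q * tl fx n) ^ (1 / q) := by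
      have hs : Summable fun m => 2 ^ q * (if n ≤ m then fx m else 0) :=
        (summable_ite_of fx hxs hfx0 _).mul_left _
      have hb : ∀ m,
          |(signPermMap P hP θ hθ (Equiv.refl ℕ) x : ∀ _ : ℕ, ℝ) m
            - (signPermMap P hP θtr hθtr1 (Equiv.refl ℕ) x : ∀ _ : ℕ, ℝ) m| ^ q
          ≤ 2 ^ q * (if n ≤ m then fx m else 0) := by
        intro m
        rw [sp_apply, sp_apply]
        show |θ m * (x : ∀ _ : ℕ, ℝ) ((Equiv.refl ℕ).symm m)
          - θtr m * (x : ∀ _ : ℕ, ℝ) ((Equiv.refl ℕ).symm m)| ^ q ≤ _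
        by_cases h : m < n
        · have : θtr m = θ m := by simp [hθtr, h]
          rw [this, sub_self, abs_zero, Real.zero_rpow hq.ne', if_neg (not_le.mpr h)]
          simp
        · have h1 : θtr m = 1 := by simp [hθtr, h]
          rw [h1, if_pos (Nat.le_of_not_lt h)]
          have h2 : |θ m * (x : ∀ _ : ℕ, ℝ) ((Equiv.refl ℕ).symm m)
              - 1 * (x : ∀ _ : ℕ, ℝ) ((Equiv.refl ℕ).symm m)|
              ≤ 2 * |(x : ∀ _ : ℕ, ℝ) m| := by
            show |θ m * (x : ∀ _ : ℕ, ℝ) m - 1 * (x : ∀ _ : ℕ, ℝ) m| ≤ _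
            rcases hθ m with hv | hv <;> rw [hv] <;>
              [skip; skip] <;> rw [abs_le] <;> constructor <;>
              cases abs_cases ((x : ∀ _ : ℕ, ℝ) m) <;> nlinarith [abs_nonneg ((x : ∀ _ : ℕ, ℝ) m)]
          calc |θ m * (x : ∀ _ : ℕ, ℝ) ((Equiv.refl ℕ).symm m)
              - 1 * (x : ∀ _ : ℕ, ℝ) ((Equiv.refl ℕ).symm m)| ^ q
              ≤ (2 * |(x : ∀ _ : ℕ, ℝ) m|) ^ q :=
                Real.rpow_le_rpow (abs_nonneg _) h2 hq.le
            _ = 2 ^ q * fx m := Real.mul_rpow (by norm_num) (abs_nonneg _)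
      have := norm_sub_le_tsum P hP _ _ _ hs hb
      rwa [tsum_mul_left, ← hqdef, show (∑' m, if n ≤ m then fx m else 0) = tl fx n from rfl]
        at this
    calc |A P hP g n (signPermMap P hP θ hθ (Equiv.refl ℕ) x)
        - A P hP g n (signPermMap P hP θtr hθtr1 (Equiv.refl ℕ) x)|
        ≤ ‖signPermMap P hP θ hθ (Equiv.refl ℕ) x
            - signPermMap P hP θtr hθtr1 (Equiv.refl ℕ) x‖ ^ α * (‖x‖ ^ α + ‖x‖ ^ α) := hH
      _ ≤ ((2 ^ q * tl fx n) ^ (1 / q)) ^ α * (2 * ‖x‖ ^ α) := by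
          rw [show ‖x‖ ^ α + ‖x‖ ^ α = 2 * ‖x‖ ^ α by ring]
          apply mul_le_mul_of_nonneg_right
            (Real.rpow_le_rpow (norm_nonneg _) hnd hα₀.le)
            (by positivity)
  have hbnd : Filter.Tendsto (fun n => ((2 ^ q * tl fx n) ^ (1 / q)) ^ α * (2 * ‖x‖ ^ α))
      Filter.atTop (nhds 0) := by
    have h1 : Filter.Tendsto (fun n => 2 ^ q * tl fx n) Filter.atTop (nhds 0) := by
      have := (tl_tendsto fx hxs hfx0).const_mul (2 ^ q : ℝ)
      simpa using this
    have h2 := (h1.rpow_const (p := 1 / q) (Or.inr (by positivity))).rpow_const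
      (p := α) (Or.inr hα₀.le)
    rw [Real.zero_rpow (by positivity : (1 : ℝ) / q ≠ 0), Real.zero_rpow hα₀.ne'] at h2
    have h3 := h2.mul_const (2 * ‖x‖ ^ α)
    simpa using h3
  exact squeeze_zero_norm key hbnd

end SymmND
namespace SymmND

variable (P : ℝ≥0∞) [Fact (1 ≤ P)]

set_option maxHeartbeats 2000000 in
lemma A_perm_diff_tendsto (hP : P ≠ ∞) (g : lp (fun _ : ℕ => ℝ) P → ℝ) (α : ℝ) (hα₀ : 0 < α)
    (hHol : ∀ a b, |g a - g b| ≤ ‖a - b‖ ^ α * (‖a‖ ^ α + ‖b‖ ^ α))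
    (σ : Equiv.Perm ℕ) (x : lp (fun _ : ℕ => ℝ) P) :
    Filter.Tendsto
      (fun n => A P hP g n (signPermMap P hP (fun _ => 1) (fun _ => Or.inl rfl) σ x)
        - A P hP g n x)
      Filter.atTop (nhds 0) := by
  have hq : 0 < P.toReal := prPos P hP
  set q := P.toReal with hqdef
  set fx : ℕ → ℝ := fun a => |(x : ∀ _ : ℕ, ℝ) a| ^ q with hfx
  have hxs : Summable fx := summable_coord P hP x
  have hfx0 : ∀ m, 0 ≤ fx m := fun m => Real.rpow_nonneg (abs_nonneg _) q
  set w : ℕ → ℝ := fun m => fx (σ.symm m) with hwdef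
  have hws : Summable w := (Equiv.summable_iff σ.symm (f := fx)).2 hxs
  have hw0 : ∀ m, 0 ≤ w m := fun m => hfx0 _
  set W := signPermMap P hP (fun _ => 1) (fun _ => Or.inl rfl) σ with hWdef
  have key : ∀ n, |A P hP g n (W x) - A P hP g n x|
      ≤ ((2 ^ q * (2 * tl fx n + 2 * tl w n)) ^ (1 / q)) ^ α * (2 * ‖x‖ ^ α) := by
    intro n
    set e : Equiv.Perm ℕ := pext n (dperm σ n) with hedef
    set D := Tmap P hP n (fun _ => true, dperm σ n) x with hDdef
    have hAeq : A P hP g n D = A P hP g n x := A_comp_perm P hP g n (dperm σ n) x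
    rw [← hAeq]
    have hH := A_holder P hP g α hHol n (W x) D
    rw [hWdef, sp_norm, hDdef, Tmap_norm] at hH
    -- coordinates
    have hu : ∀ m, (W x : ∀ _ : ℕ, ℝ) m = (x : ∀ _ : ℕ, ℝ) (σ.symm m) := by
      intro m
      rw [hWdef, sp_apply]
      ring
    have hv : ∀ m, (D : ∀ _ : ℕ, ℝ) m = (x : ∀ _ : ℕ, ℝ) (e.symm m) := by
      intro m
      rw [hDdef, Tmap, sp_apply, sgn_true]
      ring
    set vv : ℕ → ℝ := fun m => fx (e.symm m) with hvv
    have hvs : Summable vv := (Equiv.summable_iff e.symm (f := fx)).2 hxs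
    have hvv0 : ∀ m, 0 ≤ vv m := fun m => hfx0 _
    set hA : ℕ → ℝ := fun m => if m < n ∧ σ.symm m < n then 0 else w m with hhA
    set hB : ℕ → ℝ := fun m => if m < n ∧ σ.symm m < n then 0 else vv m with hhB
    have hAs : Summable hA := by
      apply Summable.of_nonneg_of_le _ _ hws
      · intro m; by_cases h : m < n ∧ σ.symm m < n <;> simp [hhA, h, hw0 m]
      · intro m; by_cases h : m < n ∧ σ.symm m < n <;> simp [hhA, h, hw0 m]
    have hBs : Summable hB := by
      apply Summable.of_nonneg_of_le _ _ hvs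
      · intro m; by_cases h : m < n ∧ σ.symm m < n <;> simp [hhB, h, hvv0 m]
      · intro m; by_cases h : m < n ∧ σ.symm m < n <;> simp [hhB, h, hvv0 m]
    -- sum bound for hA
    have hAle : ∑' m, hA m ≤ tl w n + tl fx n := by
      have step : ∀ m, hA m ≤ (if n ≤ m then w m else 0) + (if n ≤ σ.symm m then w m else 0) := by
        intro m
        by_cases h : m < n ∧ σ.symm m < n
        · simp only [hhA, if_pos h]
          have := hw0 m
          by_cases h1 : n ≤ m <;> by_cases h2 : n ≤ σ.symm m <;> simp [h1, h2] <;> positivity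
        · simp only [hhA, if_neg h]
          rcases not_and_or.mp h with h1 | h1
          · rw [if_pos (Nat.le_of_not_lt h1)]
            by_cases h2 : n ≤ σ.symm m <;> simp [h2, hw0 m]
          · rw [if_pos (Nat.le_of_not_lt h1)]
            by_cases h2 : n ≤ m <;> simp [h2, hw0 m]
      have hsum2 : Summable fun m =>
          (if n ≤ m then w m else 0) + (if n ≤ σ.symm m then w m else 0) :=
        (summable_ite_of w hws hw0 _).add (summable_ite_of w hws hw0 _)
      have h1 := Summable.tsum_le_tsum step hAs hsum2
      rw [Summable.tsum_add (summable_ite_of w hws hw0 _) (summable_ite_of w hws hw0 _)] at h1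
      have h2 : (∑' m, if n ≤ σ.symm m then w m else 0) = tl fx n := by
        rw [← Equiv.tsum_eq σ (fun m => if n ≤ σ.symm m then w m else 0)]
        apply tsum_congr
        intro a
        simp [hwdef]
      rw [h2] at h1
      exact h1
    -- sum bound for hB
    have hBle : ∑' m, hB m ≤ tl fx n + tl w n := by
      have he : ∑' m, hB m = ∑' a, hB (e a) := (Equiv.tsum_eq e hB).symm
      rw [he]
      have step : ∀ a, hB (e a)
          ≤ (if n ≤ a then fx a else 0) + (if n ≤ σ a then fx a else 0) := by
        intro a
        have hval : vv (e a) = fx a := by simp [hvv]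
        by_cases h : a < n ∧ σ a < n
        · have hgood : e a < n ∧ σ.symm (e a) < n := by
            have h1 : e a = σ a := by
              rw [hedef]
              exact pext_dperm_lt σ n a h.1 h.2
            rw [h1]
            exact ⟨h.2, by simp [h.1]⟩
          simp only [hhB, if_pos hgood]
          by_cases h1 : n ≤ a <;> by_cases h2 : n ≤ σ a <;> simp [h1, h2, hfx0 a] <;> positivity
        · have hle1 : hB (e a) ≤ fx a := by
            by_cases h2 : e a < n ∧ σ.symm (e a) < n <;> simp [hhB, h2, hval, hfx0 a]
          rcases not_and_or.mp h with h1 | h1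
          · calc hB (e a) ≤ fx a := hle1
              _ ≤ _ := by
                rw [if_pos (Nat.le_of_not_lt h1)]
                by_cases h2 : n ≤ σ a <;> simp [h2, hfx0 a]
          · calc hB (e a) ≤ fx a := hle1
              _ ≤ _ := by
                rw [if_pos (Nat.le_of_not_lt h1)]
                by_cases h2 : n ≤ a <;> simp [h2, hfx0 a]
      have hsum2 : Summable fun a =>
          (if n ≤ a then fx a else 0) + (if n ≤ σ a then fx a else 0) :=
        (summable_ite_of fx hxs hfx0 _).add (summable_ite_of fx hxs hfx0 _)
      have hBs' : Summable fun a => hB (e a) := (Equiv.summable_iff e (f := hB)).2 hBs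
      have h1 := Summable.tsum_le_tsum step hBs' hsum2
      rw [Summable.tsum_add (summable_ite_of fx hxs hfx0 _) (summable_ite_of fx hxs hfx0 _)] at h1
      have h2 : (∑' a, if n ≤ σ a then fx a else 0) = tl w n := by
        rw [← Equiv.tsum_eq σ.symm (fun a => if n ≤ σ a then fx a else 0)]
        apply tsum_congr
        intro m
        simp [hwdef]
      rw [h2] at h1
      exact h1
    -- norm difference bound
    have hnd : ‖W x - D‖ ≤ (2 ^ q * (2 * tl fx n + 2 * tl w n)) ^ (1 / q) := by
      have hh : ∀ m, |(W x : ∀ _ : ℕ, ℝ) m - (D : ∀ _ : ℕ, ℝ) m| ^ q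
          ≤ 2 ^ q * (hA m + hB m) := by
        intro m
        rw [hu m, hv m]
        by_cases h : m < n ∧ σ.symm m < n
        · have h1 : e.symm m = σ.symm m := by
            rw [hedef]
            exact pext_dperm_symm σ n m h.1 h.2
          rw [h1, sub_self, abs_zero, Real.zero_rpow hq.ne']
          simp only [hhA, hhB, if_pos h]
          positivity
        · simp only [hhA, hhB, if_neg h]
          calc |(x : ∀ _ : ℕ, ℝ) (σ.symm m) - (x : ∀ _ : ℕ, ℝ) (e.symm m)| ^ q
              ≤ 2 ^ q * (|(x : ∀ _ : ℕ, ℝ) (σ.symm m)| ^ q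
                  + |(x : ∀ _ : ℕ, ℝ) (e.symm m)| ^ q) :=
                abs_sub_rpow_le q hq.le _ _
            _ = 2 ^ q * (w m + vv m) := rfl
      have hhs : Summable fun m => 2 ^ q * (hA m + hB m) := ((hAs.add hBs).mul_left _)
      have h1 := norm_sub_le_tsum P hP _ _ _ hhs hh
      have h2 : (∑' m, 2 ^ q * (hA m + hB m)) ≤ 2 ^ q * (2 * tl fx n + 2 * tl w n) := by
        rw [tsum_mul_left, Summable.tsum_add hAs hBs]
        apply mul_le_mul_of_nonneg_left _ (by positivity)
        calc (∑' m, hA m) + ∑' m, hB m ≤ (tl w n + tl fx n) + (tl fx n + tl w n) :=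
              add_le_add hAle hBle
          _ = 2 * tl fx n + 2 * tl w n := by ring
      calc ‖W x - D‖ ≤ (∑' m, 2 ^ q * (hA m + hB m)) ^ (1 / q) := h1
        _ ≤ (2 ^ q * (2 * tl fx n + 2 * tl w n)) ^ (1 / q) := by
            apply Real.rpow_le_rpow _ h2 (by positivity)
            apply tsum_nonneg
            intro m
            have := hw0 m
            have := hvv0 m
            have h3 : 0 ≤ hA m := by
              by_cases h : m < n ∧ σ.symm m < n <;> simp [hhA, h, hw0 m]
            have h4 : 0 ≤ hB m := by
              by_cases h : m < n ∧ σ.symm m < n <;> simp [hhB, h, hvv0 m]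
            positivity
    calc |A P hP g n (W x) - A P hP g n D|
        ≤ ‖W x - D‖ ^ α * (‖x‖ ^ α + ‖x‖ ^ α) := hH
      _ ≤ ((2 ^ q * (2 * tl fx n + 2 * tl w n)) ^ (1 / q)) ^ α * (2 * ‖x‖ ^ α) := by
          rw [show ‖x‖ ^ α + ‖x‖ ^ α = 2 * ‖x‖ ^ α by ring]
          apply mul_le_mul_of_nonneg_right
            (Real.rpow_le_rpow (norm_nonneg _) hnd hα₀.le)
            (by positivity)
  have hbnd : Filter.Tendsto
      (fun n => ((2 ^ q * (2 * tl fx n + 2 * tl w n)) ^ (1 / q)) ^ α * (2 * ‖x‖ ^ α))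
      Filter.atTop (nhds 0) := by
    have h0 : Filter.Tendsto (fun n => 2 * tl fx n + 2 * tl w n) Filter.atTop (nhds 0) := by
      have h1 := ((tl_tendsto fx hxs hfx0).const_mul (2 : ℝ)).add
        ((tl_tendsto w hws hw0).const_mul (2 : ℝ))
      simpa using h1
    have h1 : Filter.Tendsto (fun n => 2 ^ q * (2 * tl fx n + 2 * tl w n))
        Filter.atTop (nhds 0) := by
      have := h0.const_mul (2 ^ q : ℝ)
      simpa using this
    have h2 := (h1.rpow_const (p := 1 / q) (Or.inr (by positivity))).rpow_const
      (p := α) (Or.inr hα₀.le)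
    rw [Real.zero_rpow (by positivity : (1 : ℝ) / q ≠ 0), Real.zero_rpow hα₀.ne'] at h2
    have h3 := h2.mul_const (2 * ‖x‖ ^ α)
    simpa using h3
  exact squeeze_zero_norm key hbnd

end SymmND

/-- **Symmetrization of the negative definite function on ℓ_p.**
Fix `2 < p < ∞` and `0 < α < 1/2`. If `g : ℓ_p → ℝ` is a negative definite function with
`g 0 = 0`, `φ₁(‖x‖) ≤ g x ≤ ‖x‖^(2α)` (with `φ₁` nondecreasing, `φ₁(t) → ∞`), and
`|g a − g b| ≤ ‖a−b‖^α (‖a‖^α + ‖b‖^α)`, then there is a continuous negative definite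
`g̃ : ℓ_p → ℝ` with `g̃ 0 = 0`, `φ₁(‖x‖) ≤ g̃ x ≤ ‖x‖^(2α)`, which is moreover symmetric:
`g̃ (T_{θ,σ} x) = g̃ x` for all signs `θ`, permutations `σ` and `x ∈ ℓ_p`. -/
theorem exists_symmetric_negative_definite
    (p : ℝ) (hp : 2 < p) [Fact (1 ≤ ENNReal.ofReal p)]
    (hp' : ENNReal.ofReal p ≠ ∞)
    (α : ℝ) (hα₀ : 0 < α) (hα : α < 1 / 2)
    (g : lp (fun _ : ℕ => ℝ) (ENNReal.ofReal p) → ℝ)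
    (hneg : ∀ (n : ℕ) (x : Fin n → lp (fun _ : ℕ => ℝ) (ENNReal.ofReal p)) (c : Fin n → ℝ),
      (∑ i, c i) = 0 → ∑ i, ∑ j, c i * c j * g (x i - x j) ≤ 0)
    (hg0 : g 0 = 0)
    (φ₁ : ℝ≥0 → ℝ≥0) (hφ₁ : Monotone φ₁) (hφ₁top : Tendsto φ₁ atTop atTop)
    (hbd : ∀ x, (φ₁ ‖x‖₊ : ℝ) ≤ g x ∧ g x ≤ ‖x‖ ^ (2 * α))
    (hHol : ∀ a b, |g a - g b| ≤ ‖a - b‖ ^ α * (‖a‖ ^ α + ‖b‖ ^ α)) :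
    ∃ gt : lp (fun _ : ℕ => ℝ) (ENNReal.ofReal p) → ℝ,
      Continuous gt ∧
      (∀ (n : ℕ) (x : Fin n → lp (fun _ : ℕ => ℝ) (ENNReal.ofReal p)) (c : Fin n → ℝ),
        (∑ i, c i) = 0 → ∑ i, ∑ j, c i * c j * gt (x i - x j) ≤ 0) ∧
      gt 0 = 0 ∧
      (∀ x, (φ₁ ‖x‖₊ : ℝ) ≤ gt x ∧ gt x ≤ ‖x‖ ^ (2 * α)) ∧
      (∀ (θ : ℕ → ℝ) (hθ : ∀ n, θ n = 1 ∨ θ n = -1) (σ : Equiv.Perm ℕ) (x),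
        gt (signPermMap (ENNReal.ofReal p) hp' θ hθ σ x) = gt x) := by
  classical
  let P := ENNReal.ofReal p
  let U : Ultrafilter ℕ := Ultrafilter.of Filter.atTop
  have hU : (U : Filter ℕ) ≤ Filter.atTop := Ultrafilter.of_le _
  have hex : ∀ x, ∃ L, Filter.Tendsto (fun n => SymmND.A P hp' g n x) (U : Filter ℕ) (nhds L) := by
    intro x
    have hcpt : IsCompact (Set.Icc ((φ₁ ‖x‖₊ : ℝ)) (‖x‖ ^ (2 * α))) := isCompact_Icc
    have hle : (Ultrafilter.map (fun n => SymmND.A P hp' g n x) U : Filter ℝ)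
        ≤ Filter.principal (Set.Icc ((φ₁ ‖x‖₊ : ℝ)) (‖x‖ ^ (2 * α))) := by
      rw [Filter.le_principal_iff, Ultrafilter.coe_map, Filter.mem_map]
      apply Filter.univ_mem'
      intro n
      exact ⟨(SymmND.A_bounds P hp' g α φ₁ hbd n x).1, (SymmND.A_bounds P hp' g α φ₁ hbd n x).2⟩
    obtain ⟨a, -, ha⟩ := hcpt.ultrafilter_le_nhds _ hle
    rw [Ultrafilter.coe_map] at ha
    exact ⟨a, ha⟩
  choose gt hgt using hex
  have hgtH : ∀ a b, |gt a - gt b| ≤ ‖a - b‖ ^ α * (‖a‖ ^ α + ‖b‖ ^ α) := by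
    intro a b
    have h1 := ((hgt a).sub (hgt b)).abs
    exact le_of_tendsto h1 (Filter.Eventually.of_forall fun n =>
      SymmND.A_holder P hp' g α hHol n a b)
  refine ⟨gt, ?_, ?_, ?_, ?_, ?_⟩
  · -- continuity
    rw [continuous_iff_continuousAt]
    intro x₀
    have hc1 : Filter.Tendsto (fun x : lp (fun _ : ℕ => ℝ) P => ‖x - x₀‖) (nhds x₀)
        (nhds 0) := by
      have h0 : Filter.Tendsto (fun x : lp (fun _ : ℕ => ℝ) P => x - x₀) (nhds x₀)
          (nhds (x₀ - x₀)) := tendsto_id.sub tendsto_const_nhds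
      rw [sub_self] at h0
      have h1 := h0.norm
      rw [norm_zero] at h1
      exact h1
    have hc2 := hc1.rpow_const (p := α) (Or.inr hα₀.le)
    rw [Real.zero_rpow hα₀.ne'] at hc2
    have hc3 : Filter.Tendsto (fun x : lp (fun _ : ℕ => ℝ) P => ‖x‖ ^ α + ‖x₀‖ ^ α) (nhds x₀)
        (nhds (‖x₀‖ ^ α + ‖x₀‖ ^ α)) :=
      Filter.Tendsto.add_const _ ((continuous_norm.tendsto x₀).rpow_const (Or.inr hα₀.le))
    have hb := hc2.mul hc3
    rw [zero_mul] at hb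
    have hsq : Filter.Tendsto (fun x => gt x - gt x₀) (nhds x₀) (nhds 0) :=
      squeeze_zero_norm (fun x => hgtH x x₀) hb
    have h4 := hsq.add_const (gt x₀)
    have h5 : (fun x => gt x - gt x₀ + gt x₀) = gt := by funext x; ring
    rw [h5, zero_add] at h4
    exact h4
  · -- negative definite
    intro n x c hc
    have h1 : Filter.Tendsto (fun N => ∑ i, ∑ j, c i * c j * SymmND.A P hp' g N (x i - x j))
        (U : Filter ℕ) (nhds (∑ i, ∑ j, c i * c j * gt (x i - x j))) := by
      apply tendsto_finset_sum
      intro i _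
      apply tendsto_finset_sum
      intro j _
      exact (hgt _).const_mul _
    exact le_of_tendsto h1 (Filter.Eventually.of_forall fun N =>
      SymmND.A_negdef P hp' g hneg N n x c hc)
  · -- zero
    have h1 : (fun n => SymmND.A P hp' g n 0) = fun _ => (0 : ℝ) :=
      funext fun n => SymmND.A_zero P hp' g hg0 n
    have h2 := hgt 0
    rw [h1] at h2
    exact tendsto_nhds_unique h2 tendsto_const_nhds
  · -- bounds
    intro x
    constructor
    · exact ge_of_tendsto (hgt x) (Filter.Eventually.of_forall fun n =>
        (SymmND.A_bounds P hp' g α φ₁ hbd n x).1)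
    · exact le_of_tendsto (hgt x) (Filter.Eventually.of_forall fun n =>
        (SymmND.A_bounds P hp' g α φ₁ hbd n x).2)
  · -- symmetry
    intro θ hθ σ x
    have hinv : ∀ (W : lp (fun _ : ℕ => ℝ) P → lp (fun _ : ℕ => ℝ) P) (y),
        Filter.Tendsto (fun n => SymmND.A P hp' g n (W y) - SymmND.A P hp' g n y)
          Filter.atTop (nhds 0) → gt (W y) = gt y := by
      intro W y h
      have h1 := h.mono_left hU
      have h2 := (hgt (W y)).sub (hgt y)
      have h3 := tendsto_nhds_unique h2 h1
      linarith [h3]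
    have inv1 : gt (signPermMap P hp' θ hθ (Equiv.refl ℕ)
        (signPermMap P hp' (fun _ => 1) (fun _ => Or.inl rfl) σ x))
        = gt (signPermMap P hp' (fun _ => 1) (fun _ => Or.inl rfl) σ x) :=
      hinv (signPermMap P hp' θ hθ (Equiv.refl ℕ)) _
        (SymmND.A_sign_diff_tendsto P hp' g α hα₀ hHol θ hθ _)
    have inv2 : gt (signPermMap P hp' (fun _ => 1) (fun _ => Or.inl rfl) σ x) = gt x :=
      hinv (signPermMap P hp' (fun _ => 1) (fun _ => Or.inl rfl) σ) x
        (SymmND.A_perm_diff_tendsto P hp' g α hα₀ hHol σ x)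
    rw [SymmND.sp_decomp P hp' θ hθ σ x, inv1, inv2]
end
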